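/- Let n ≥ 1, α > 0, and let u : {(x₁,x₂) ∈ ℝ² : x₂ ≥ 0} → ℝⁿ be continuous, harmonic on the open upper half-plane {x₂ > 0}, vanish identically on the boundary line (u(t,0) = 0 for all t ∈ ℝ), be α-homogeneous (u(λp) = λ^α u(p) for all λ > 0 and all p with p₂ ≥ 0), and not be identically zero. Then α is a positive integer l, and there exists a nonzero vector c ∈ ℝⁿ such that u(r cos θ, r sin θ) = c · r^l · sin(lθ) for all r ≥ 0 and θ ∈ [0, π]. -/

import Mathlib

open Real

open Set

/-- A function `f : ℝ² → ℝⁿ` is harmonic on an open set `U` if it is twice continuously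
differentiable there and its Laplacian `∂²f/∂x₁² + ∂²f/∂x₂²` vanishes on `U`. -/
def HarmonicOn {n : ℕ} (f : ℝ × ℝ → EuclideanSpace ℝ (Fin n)) (U : Set (ℝ × ℝ)) : Prop :=
  ContDiffOn ℝ 2 f U ∧ ∀ x ∈ U,
    fderivWithin ℝ (fun y => fderivWithin ℝ f U y ((1 : ℝ), (0 : ℝ))) U x ((1 : ℝ), (0 : ℝ)) +
      fderivWithin ℝ (fun y => fderivWithin ℝ f U y ((0 : ℝ), (1 : ℝ))) U x ((0 : ℝ), (1 : ℝ)) = 0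

section Aux

variable {E : Type*} [NormedAddCommGroup E] [NormedSpace ℝ E]

lemma ode_classify {α : ℝ} (hα : 0 < α)
    (g g' : ℝ → E)
    (hg : ∀ θ ∈ Set.Ioo 0 π, HasDerivAt g (g' θ) θ)
    (hg' : ∀ θ ∈ Set.Ioo 0 π, HasDerivAt g' (-(α ^ 2) • g θ) θ) :
    ∃ A B : E, ∀ θ ∈ Set.Ioo 0 π, g θ = Real.cos (α * θ) • A + Real.sin (α * θ) • B := by
  set θ₀ : ℝ := π / 2 with hθ₀
  have hθ₀mem : θ₀ ∈ Set.Ioo 0 π := ⟨by positivity, by linarith [pi_pos]⟩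
  set a := g θ₀ with ha
  set b := g' θ₀ with hb
  set A : E := Real.cos (α * θ₀) • a - (α⁻¹ * Real.sin (α * θ₀)) • b with hA
  set B : E := Real.sin (α * θ₀) • a + (α⁻¹ * Real.cos (α * θ₀)) • b with hB
  refine ⟨A, B, ?_⟩
  set G : ℝ → E := fun θ => Real.cos (α * θ) • A + Real.sin (α * θ) • B with hG
  set G' : ℝ → E := fun θ => (-(α * Real.sin (α * θ))) • A + (α * Real.cos (α * θ)) • B with hG'
  -- the linear vector field
  set L : (E × E) →L[ℝ] (E × E) :=
    (ContinuousLinearMap.snd ℝ E E).prod ((-(α ^ 2)) • ContinuousLinearMap.fst ℝ E E) with hL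
  have hLapp : ∀ p : E × E, L p = (p.2, -(α ^ 2) • p.1) := fun p => rfl
  have hlip : ∀ t : ℝ, LipschitzOnWith ‖L‖₊ (fun p => L p) ((fun _ => (univ : Set (E × E))) t) :=
    fun _ => L.lipschitz.lipschitzOnWith
  have pyth : Real.sin (α * θ₀) ^ 2 + Real.cos (α * θ₀) ^ 2 = 1 := sin_sq_add_cos_sq _
  -- trig derivative helpers
  have hcosd : ∀ θ : ℝ, HasDerivAt (fun t => Real.cos (α * t)) (-(α * Real.sin (α * θ))) θ := by
    intro θ
    have := ((hasDerivAt_id θ).const_mul α).cos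
    simpa [mul_comm] using this
  have hsind : ∀ θ : ℝ, HasDerivAt (fun t => Real.sin (α * t)) (α * Real.cos (α * θ)) θ := by
    intro θ
    have := ((hasDerivAt_id θ).const_mul α).sin
    simpa [mul_comm] using this
  have hGd : ∀ θ : ℝ, HasDerivAt G (G' θ) θ := fun θ =>
    ((hcosd θ).smul_const A).add ((hsind θ).smul_const B)
  have hG'd : ∀ θ : ℝ, HasDerivAt G' (-(α ^ 2) • G θ) θ := by
    intro θ
    have h1 : HasDerivAt (fun t => -(α * Real.sin (α * t))) (-(α * (α * Real.cos (α * θ)))) θ :=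
      ((hsind θ).const_mul α).neg
    have h2 : HasDerivAt (fun t => α * Real.cos (α * t)) (α * -(α * Real.sin (α * θ))) θ :=
      (hcosd θ).const_mul α
    have := (h1.smul_const A).add (h2.smul_const B)
    convert this using 1
    · rfl
    simp only [hG]
    match_scalars <;> ring
  -- the two solutions of the system
  have key : EqOn (fun θ => (g θ, g' θ)) (fun θ => (G θ, G' θ)) (Set.Ioo 0 π) := by
    apply ODE_solution_unique_of_mem_Ioo (v := fun _ p => L p) (s := fun _ => univ) (fun t _ => hlip t) hθ₀mem
    · intro t ht
      refine ⟨?_, trivial⟩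
      rw [hLapp]
      exact (hg t ht).prodMk (hg' t ht)
    · intro t ht
      refine ⟨?_, trivial⟩
      rw [hLapp]
      exact (hGd t).prodMk (hG'd t)
    · have hGθ₀ : G θ₀ = a := by
        simp only [hG, hA, hB]
        match_scalars
        · linear_combination pyth
        · field_simp
          ring
      have hG'θ₀ : G' θ₀ = b := by
        simp only [hG', hA, hB]
        match_scalars
        · ring
        · field_simp
          linear_combination pyth
      simp [hGθ₀, hG'θ₀, ha, hb]
  intro θ hθ
  have h := key hθ
  simp only [Prod.mk.injEq] at h
  simpa [hG] using h.1


end Aux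

set_option maxHeartbeats 2000000 in
/-- A nontrivial continuous `α`-homogeneous function on the closed upper half-plane, harmonic
in the open upper half-plane and vanishing on the boundary line, is of the form
`u(r cos θ, r sin θ) = c rˡ sin(lθ)` for a positive integer `l = α` and some `c ≠ 0`. -/
theorem statement8 {n : ℕ} (hn : 1 ≤ n) (α : ℝ) (hα : 0 < α)
    (u : ℝ × ℝ → EuclideanSpace ℝ (Fin n))
    (hcont : ContinuousOn u {x : ℝ × ℝ | 0 ≤ x.2})
    (hharm : HarmonicOn u {x : ℝ × ℝ | 0 < x.2})
    (hbd : ∀ t : ℝ, u (t, 0) = 0)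
    (hhom : ∀ lam : ℝ, 0 < lam → ∀ x : ℝ × ℝ, 0 ≤ x.2 → u (lam • x) = lam ^ α • u x)
    (hnz : ∃ x : ℝ × ℝ, 0 ≤ x.2 ∧ u x ≠ 0) :
    ∃ l : ℕ, 0 < l ∧ α = (l : ℝ) ∧
      ∃ c : EuclideanSpace ℝ (Fin n), c ≠ 0 ∧
        ∀ r : ℝ, 0 ≤ r → ∀ θ : ℝ, 0 ≤ θ → θ ≤ π →
          u (r * Real.cos θ, r * Real.sin θ) = (r ^ l * Real.sin ((l : ℝ) * θ)) • c := by
  set U : Set (ℝ × ℝ) := {x : ℝ × ℝ | 0 < x.2} with hUdef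
  have hU : IsOpen U := isOpen_lt continuous_const continuous_snd
  obtain ⟨hC2, hlap⟩ := hharm
  set f : ℝ × ℝ → (ℝ × ℝ) →L[ℝ] EuclideanSpace ℝ (Fin n) := fderiv ℝ u with hfdef
  set H : ℝ × ℝ → (ℝ × ℝ) →L[ℝ] (ℝ × ℝ) →L[ℝ] EuclideanSpace ℝ (Fin n) := fderiv ℝ f with hHdef
  have hca : ∀ x ∈ U, ContDiffAt ℝ 2 u x := fun x hx => hC2.contDiffAt (hU.mem_nhds hx)
  have hdiff : ∀ x ∈ U, DifferentiableAt ℝ u x := fun x hx =>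
    (hca x hx).differentiableAt (by norm_num)
  have hfdiff : ∀ x ∈ U, DifferentiableAt ℝ f x := fun x hx =>
    ((hca x hx).fderiv_right (by norm_num : (1 : WithTop ℕ∞) + 1 ≤ 2)).differentiableAt (by norm_num)
  -- Laplacian in terms of H
  have lap0 : ∀ x ∈ U, H x (1, 0) (1, 0) + H x (0, 1) (0, 1) = 0 := by
    intro x hx
    have key : ∀ v : ℝ × ℝ,
        fderivWithin ℝ (fun y => fderivWithin ℝ u U y v) U x = (H x).flip v := by
      intro v
      have he : Set.EqOn (fun y => fderivWithin ℝ u U y v) (fun y => f y v) U := by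
        intro y hy
        simp only [hfdef, fderivWithin_of_isOpen hU hy]
      have h1 : fderivWithin ℝ (fun y => fderivWithin ℝ u U y v) U x
          = fderivWithin ℝ (fun y => f y v) U x :=
        fderivWithin_congr he (he hx)
      rw [h1, fderivWithin_of_isOpen hU hx]
      have h2 : HasFDerivAt (fun y => f y v) (((f x).comp 0) + (H x).flip v) x :=
        ((hfdiff x hx).hasFDerivAt.clm_apply (hasFDerivAt_const v x))
      simpa using h2.fderiv
    have := hlap x hx
    rw [key ((1 : ℝ), (0 : ℝ)), key ((0 : ℝ), (1 : ℝ))] at this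
    simpa using this
  -- Euler's relation
  have hEuler : ∀ x ∈ U, f x x = α • u x := by
    intro x hx
    have hphi : HasDerivAt (fun lam : ℝ => lam • x) x 1 := by
      simpa using (hasDerivAt_id (1 : ℝ)).smul_const x
    have hux : HasFDerivAt u (f x) x := (hdiff x hx).hasFDerivAt
    have h1 : HasDerivAt (fun lam : ℝ => u (lam • x)) (f x x) 1 := by
      have hux' : HasFDerivAt u (f x) ((1 : ℝ) • x) := by rwa [one_smul]
      exact hux'.comp_hasDerivAt (1 : ℝ) hphi
    have h2 : HasDerivAt (fun lam : ℝ => lam ^ α • u x) (α • u x) 1 := by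
      have := (Real.hasDerivAt_rpow_const (x := (1 : ℝ)) (p := α) (Or.inl one_ne_zero)).smul_const
        (u x)
      simpa using this
    have hev : (fun lam : ℝ => u (lam • x)) =ᶠ[nhds 1] (fun lam : ℝ => lam ^ α • u x) := by
      filter_upwards [isOpen_Ioi.mem_nhds (show (0:ℝ) < 1 by norm_num)] with lam hlam
      exact hhom lam hlam x (le_of_lt hx)
    exact h1.unique (h2.congr_of_eventuallyEq hev)
  -- differentiated Euler relation
  have hrad : ∀ x ∈ U, ∀ v : ℝ × ℝ, H x v x = α • f x v - f x v := by
    intro x hx v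
    have hux : HasFDerivAt u (f x) x := (hdiff x hx).hasFDerivAt
    have hHx : HasFDerivAt f (H x) x := (hfdiff x hx).hasFDerivAt
    have h4 : HasFDerivAt (fun y => f y y)
        ((f x).comp (ContinuousLinearMap.id ℝ (ℝ × ℝ)) + (H x).flip x) x :=
      hHx.clm_apply (hasFDerivAt_id x)
    have h5 : HasFDerivAt (fun y => α • u y) (α • f x) x := by
      exact hux.const_smul (α : ℝ)
    have h6 : HasFDerivAt (fun y => f y y - α • u y)
        (((f x).comp (ContinuousLinearMap.id ℝ (ℝ × ℝ)) + (H x).flip x) - α • f x) x :=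
      h4.sub h5
    have h0 : HasFDerivAt (fun y : ℝ × ℝ => f y y - α • u y) (0 : (ℝ × ℝ) →L[ℝ] EuclideanSpace ℝ (Fin n)) x := by
      have hev : (fun _ : ℝ × ℝ => (0 : EuclideanSpace ℝ (Fin n))) =ᶠ[nhds x] (fun y => f y y - α • u y) := by
        filter_upwards [hU.mem_nhds hx] with y hy
        rw [hEuler y hy, sub_self]
      exact (hasFDerivAt_const (0 : EuclideanSpace ℝ (Fin n)) x).congr_of_eventuallyEq hev.symm
    have := h6.unique h0
    have happ := congrArg (fun T : (ℝ × ℝ) →L[ℝ] EuclideanSpace ℝ (Fin n) => T v) this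
    simp only [ContinuousLinearMap.add_apply, ContinuousLinearMap.coe_comp',
      ContinuousLinearMap.coe_id', Function.comp_apply, ContinuousLinearMap.flip_apply,
      ContinuousLinearMap.sub_apply, ContinuousLinearMap.smul_apply,
      ContinuousLinearMap.zero_apply, id] at happ
    -- happ : f x v + H x v x - α • f x v = 0
    have : H x v x = α • f x v - f x v := by
      rw [eq_sub_iff_add_eq]
      linear_combination (norm := module) happ
    exact this
  -- polar restriction
  set γ : ℝ → ℝ × ℝ := fun θ => (Real.cos θ, Real.sin θ) with hγdef
  set g : ℝ → EuclideanSpace ℝ (Fin n) := fun θ => u (γ θ) with hgdef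
  set g' : ℝ → EuclideanSpace ℝ (Fin n) :=
    fun θ => f (γ θ) (-Real.sin θ, Real.cos θ) with hg'def
  have hγU : ∀ θ ∈ Set.Ioo 0 π, γ θ ∈ U := by
    intro θ hθ
    have := Real.sin_pos_of_pos_of_lt_pi hθ.1 hθ.2
    simpa [hγdef, hUdef] using this
  have hγd : ∀ θ : ℝ, HasDerivAt γ (-Real.sin θ, Real.cos θ) θ := fun θ =>
    (Real.hasDerivAt_cos θ).prodMk (Real.hasDerivAt_sin θ)
  have hgd : ∀ θ ∈ Set.Ioo 0 π, HasDerivAt g (g' θ) θ := fun θ hθ =>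
    ((hdiff _ (hγU θ hθ)).hasFDerivAt).comp_hasDerivAt θ (hγd θ)
  have hg'd : ∀ θ ∈ Set.Ioo 0 π, HasDerivAt g' (-(α ^ 2) • g θ) θ := by
    intro θ hθ
    have hxU := hγU θ hθ
    have hc : HasDerivAt (fun t => f (γ t)) (H (γ θ) (-Real.sin θ, Real.cos θ)) θ :=
      ((hfdiff _ hxU).hasFDerivAt).comp_hasDerivAt θ (hγd θ)
    have hw : HasDerivAt (fun t : ℝ => ((-Real.sin t, Real.cos t) : ℝ × ℝ))
        (-Real.cos θ, -Real.sin θ) θ :=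
      ((Real.hasDerivAt_sin θ).neg).prodMk (Real.hasDerivAt_cos θ)
    have hclm := hc.clm_apply hw
    have hexp : ∀ T : (ℝ × ℝ) →L[ℝ] (ℝ × ℝ) →L[ℝ] EuclideanSpace ℝ (Fin n),
        T (Real.cos θ, Real.sin θ) (Real.cos θ, Real.sin θ)
          + T (-Real.sin θ, Real.cos θ) (-Real.sin θ, Real.cos θ)
          = T (1, 0) (1, 0) + T (0, 1) (0, 1) := by
      intro T
      have e1 : ((Real.cos θ, Real.sin θ) : ℝ × ℝ)
          = Real.cos θ • ((1 : ℝ), (0 : ℝ)) + Real.sin θ • ((0 : ℝ), (1 : ℝ)) := by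
        simp [Prod.ext_iff]
      have e2 : ((-Real.sin θ, Real.cos θ) : ℝ × ℝ)
          = (-Real.sin θ) • ((1 : ℝ), (0 : ℝ)) + Real.cos θ • ((0 : ℝ), (1 : ℝ)) := by
        simp [Prod.ext_iff]
      rw [e1, e2]
      simp only [map_add, map_smul, ContinuousLinearMap.add_apply,
        ContinuousLinearMap.coe_smul', Pi.smul_apply]
      match_scalars <;>
        first
          | ring1
          | linear_combination Real.sin_sq_add_cos_sq θ
          | linear_combination -Real.sin_sq_add_cos_sq θ
    -- compute the second derivative value
    have hval : H (γ θ) (-Real.sin θ, Real.cos θ) (-Real.sin θ, Real.cos θ)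
        + f (γ θ) (-Real.cos θ, -Real.sin θ) = -(α ^ 2) • g θ := by
      have hsum := hexp (H (γ θ))
      have hz := lap0 _ hxU
      have hrr := hrad _ hxU (γ θ)
      have heu := hEuler _ hxU
      have hfneg : f (γ θ) (-Real.cos θ, -Real.sin θ) = -(α • u (γ θ)) := by
        have : ((-Real.cos θ, -Real.sin θ) : ℝ × ℝ) = -(γ θ) := by simp [hγdef]
        rw [this, map_neg, heu]
      have hHrr : H (γ θ) (γ θ) (γ θ) = α • (α • u (γ θ)) - α • u (γ θ) := by
        rw [hrr, heu]
      have hHtt : H (γ θ) (-Real.sin θ, Real.cos θ) (-Real.sin θ, Real.cos θ)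
          = -(α • (α • u (γ θ)) - α • u (γ θ)) := by
        have : H (γ θ) (γ θ) (γ θ)
            + H (γ θ) (-Real.sin θ, Real.cos θ) (-Real.sin θ, Real.cos θ) = 0 := by
          have : γ θ = ((Real.cos θ, Real.sin θ) : ℝ × ℝ) := rfl
          rw [this, hsum, hz]
        rw [← hHrr]
        linear_combination (norm := module) this
      rw [hHtt, hfneg, hgdef]
      simp only []
      match_scalars
      ring
    rw [← hval]
    exact hclm
  obtain ⟨A, B, hAB⟩ := ode_classify hα g g' hgd hg'd
  -- continuity of g on [0, π]
  have hγmaps : ∀ θ ∈ Set.Icc (0 : ℝ) π, γ θ ∈ {x : ℝ × ℝ | 0 ≤ x.2} := by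
    intro θ hθ
    simpa [hγdef] using Real.sin_nonneg_of_nonneg_of_le_pi hθ.1 hθ.2
  have hgc : ContinuousOn g (Set.Icc 0 π) :=
    hcont.comp ((continuous_cos.prodMk continuous_sin).continuousOn) hγmaps
  have hg0 : g 0 = 0 := by simp [hgdef, hγdef]; simpa using hbd 1
  have hgπ : g π = 0 := by simp [hgdef, hγdef]; simpa using hbd (-1)
  set G : ℝ → EuclideanSpace ℝ (Fin n) :=
    fun θ => Real.cos (α * θ) • A + Real.sin (α * θ) • B with hGdef
  have hGc : Continuous G := by
    apply Continuous.add
    · exact (Real.continuous_cos.comp (continuous_const.mul continuous_id)).smul continuous_const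
    · exact (Real.continuous_sin.comp (continuous_const.mul continuous_id)).smul continuous_const
  have hlim : ∀ θ₂ ∈ Set.Icc (0:ℝ) π, (nhdsWithin θ₂ (Set.Ioo 0 π)).NeBot → G θ₂ = g θ₂ := by
    intro θ₂ hθ₂ hne
    have t1 : Filter.Tendsto G (nhdsWithin θ₂ (Set.Ioo 0 π)) (nhds (G θ₂)) :=
      (hGc.tendsto θ₂).mono_left nhdsWithin_le_nhds
    have t2 : Filter.Tendsto g (nhdsWithin θ₂ (Set.Ioo 0 π)) (nhds (g θ₂)) :=
      (hgc θ₂ hθ₂).mono Set.Ioo_subset_Icc_self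
    have hev : g =ᶠ[nhdsWithin θ₂ (Set.Ioo 0 π)] G :=
      eventually_mem_nhdsWithin.mono (fun θ hθ => hAB θ hθ)
    exact tendsto_nhds_unique t1 (t2.congr' hev)
  have hne0 : (nhdsWithin (0:ℝ) (Set.Ioo 0 π)).NeBot := by
    apply mem_closure_iff_nhdsWithin_neBot.mp
    rw [closure_Ioo Real.pi_pos.ne]
    exact ⟨le_rfl, Real.pi_pos.le⟩
  have hneπ : (nhdsWithin π (Set.Ioo 0 π)).NeBot := by
    apply mem_closure_iff_nhdsWithin_neBot.mp
    rw [closure_Ioo Real.pi_pos.ne]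
    exact ⟨Real.pi_pos.le, le_rfl⟩
  have hA0 : A = 0 := by
    have := hlim 0 ⟨le_rfl, Real.pi_pos.le⟩ hne0
    rw [hg0] at this
    simpa [hGdef] using this
  have hsinB : Real.sin (α * π) • B = 0 := by
    have := hlim π ⟨Real.pi_pos.le, le_rfl⟩ hneπ
    rw [hgπ] at this
    simpa [hGdef, hA0] using this
  have hgB : ∀ θ ∈ Set.Icc (0:ℝ) π, g θ = Real.sin (α * θ) • B := by
    intro θ hθ
    rcases eq_or_lt_of_le hθ.1 with h0 | h0
    · rw [← h0, hg0]; simp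
    rcases eq_or_lt_of_le hθ.2 with hπ | hπ
    · rw [hπ, hgπ, hsinB.symm]
    rw [hAB θ ⟨h0, hπ⟩, hA0]
    simp
  -- the nontrivial point gives B ≠ 0
  obtain ⟨x, hx2, hxne⟩ := hnz
  have hx2' : 0 < x.2 := by
    rcases eq_or_lt_of_le hx2 with h | h
    · exfalso
      apply hxne
      have : x = (x.1, (0 : ℝ)) := by
        ext
        · rfl
        · exact h.symm
      rw [this]
      exact hbd x.1
    · exact h
  set rr : ℝ := Real.sqrt (x.1 ^ 2 + x.2 ^ 2) with hrrdef
  have hsq : 0 < x.1 ^ 2 + x.2 ^ 2 := by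
    have h1 : 0 < x.2 ^ 2 := pow_pos hx2' 2
    have h2 : 0 ≤ x.1 ^ 2 := sq_nonneg _
    linarith
  have hrr2 : rr ^ 2 = x.1 ^ 2 + x.2 ^ 2 := Real.sq_sqrt hsq.le
  have hrrpos : 0 < rr := Real.sqrt_pos.mpr hsq
  have hx1lt : x.1 ^ 2 < rr ^ 2 := by
    rw [hrr2]
    have h1 : 0 < x.2 ^ 2 := pow_pos hx2' 2
    linarith
  have hlt1 : x.1 / rr < 1 := by
    rw [div_lt_one hrrpos]
    nlinarith [sq_nonneg (x.1 - rr)]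
  have hgtm1 : -1 < x.1 / rr := by
    rw [lt_div_iff₀ hrrpos]
    nlinarith [sq_nonneg (x.1 + rr)]
  set θ₁ : ℝ := Real.arccos (x.1 / rr) with hθ₁def
  have hθ₁pos : 0 < θ₁ := Real.arccos_pos.mpr hlt1
  have hθ₁lt : θ₁ < π := by
    rcases lt_or_eq_of_le (Real.arccos_le_pi (x.1 / rr)) with h | h
    · exact h
    · exact absurd (Real.arccos_eq_pi.mp h) (by linarith)
  have hcosθ₁ : Real.cos θ₁ = x.1 / rr := Real.cos_arccos hgtm1.le hlt1.le
  have hsinθ₁ : Real.sin θ₁ = x.2 / rr := by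
    rw [hθ₁def, Real.sin_arccos]
    have h' : 1 - (x.1 / rr) ^ 2 = (x.2 / rr) ^ 2 := by
      field_simp
      linarith [hrr2]
    rw [h', Real.sqrt_sq (by positivity)]
  have hxeq : rr • γ θ₁ = x := by
    have h1 : rr * (x.1 / rr) = x.1 := by field_simp
    have h2 : rr * (x.2 / rr) = x.2 := by field_simp
    have : rr • γ θ₁ = (rr * Real.cos θ₁, rr * Real.sin θ₁) := rfl
    rw [this, hcosθ₁, hsinθ₁, h1, h2]
  have hux : u x = rr ^ α • g θ₁ := by
    rw [← hxeq]
    exact hhom rr hrrpos (γ θ₁)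
      (by simpa [hγdef] using Real.sin_nonneg_of_nonneg_of_le_pi hθ₁pos.le hθ₁lt.le)
  have hgθ₁ : g θ₁ ≠ 0 := by
    intro h
    apply hxne
    rw [hux, h, smul_zero]
  have hB : B ≠ 0 := by
    intro h
    apply hgθ₁
    rw [hgB θ₁ ⟨hθ₁pos.le, hθ₁lt.le⟩, h, smul_zero]
  -- α is a positive integer
  have hsin0 : Real.sin (α * π) = 0 := by
    rcases smul_eq_zero.mp hsinB with h | h
    · exact h
    · exact absurd h hB
  obtain ⟨k, hk⟩ := Real.sin_eq_zero_iff.mp hsin0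
  have hαk : α = (k : ℝ) := by
    have := mul_right_cancel₀ Real.pi_ne_zero hk
    exact this.symm
  have hkpos : 0 < k := by
    have : (0 : ℝ) < (k : ℝ) := by rw [← hαk]; exact hα
    exact_mod_cast this
  refine ⟨k.toNat, by omega, ?_, B, hB, ?_⟩
  · rw [hαk]
    congr 1
    omega
  have hlcast : ((k.toNat : ℕ) : ℝ) = α := by
    rw [hαk]
    norm_cast
    omega
  intro r hr θ hθ0 hθπ
  rcases eq_or_lt_of_le hr with h0 | h0
  · have hpt : ((r * Real.cos θ, r * Real.sin θ) : ℝ × ℝ) = ((0 : ℝ), (0 : ℝ)) := by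
      rw [← h0]
      norm_num
    rw [hpt]
    have hl0 : (0:ℝ) ^ k.toNat = 0 := by
      apply zero_pow
      omega
    rw [show u ((0:ℝ), (0:ℝ)) = 0 from hbd 0, ← h0, hl0, zero_mul, zero_smul]
  · have hpt : ((r * Real.cos θ, r * Real.sin θ) : ℝ × ℝ) = r • γ θ := rfl
    rw [hpt]
    rw [hhom r h0 (γ θ) (by simpa [hγdef] using Real.sin_nonneg_of_nonneg_of_le_pi hθ0 hθπ)]
    rw [show u (γ θ) = g θ from rfl, hgB θ ⟨hθ0, hθπ⟩]
    rw [smul_smul]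
    congr 2
    · rw [← hlcast, Real.rpow_natCast]
    · rw [← hlcast]
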